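/- (Lemma, consumption decoupling in the charge-at-capacity region) For every time t ∈ {0,…,T−1}, if y_t ≥ (T−t)·v̄, then the optimal consumption d* in the Bellman equation at time t coincides with the optimal consumption of the static single-period surplus maximization (the two-threshold policy of Theorem 3 with prices (π_t⁺, π_t⁻)) applied to the adjusted renewable r̃_t := max{r_t − v̄, 0}: d*_i = l_i(π_t⁺) if r̃_t < Σ_j l_j(π_t⁺), d*_i = l_i(π_t⁻) if r̃_t > Σ_j l_j(π_t⁻), and d*_i = l_i(ν) with ν ∈ [π_t⁻, π_t⁺] chosen so that Σ_j l_j(ν) = r̃_t otherwise. -/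

import Mathlib

open MeasureTheory Set

/-- NEM X payment for net consumption `z` with buy price `pp` and sell price `pm`. -/
noncomputable def NEMPayment (pp pm z : ℝ) : ℝ := pp * max z 0 - pm * max (-z) 0

/-- The superdifferential of a function `f : ℝ → ℝ` (viewed as a concave function
on `[0, ∞)`) at a point `y`. -/
def superdiff (f : ℝ → ℝ) (y : ℝ) : Set ℝ :=
  {s | ∀ z, 0 ≤ z → f z ≤ f y + s * (z - y)}

/-- Data of the EV-charging / flexible-consumption dynamic program over horizon
`{0, …, T-1}` with `K` flexible loads, under NEM time-of-use prices. -/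
structure EVModel (K T : ℕ) (Ω : Type) [MeasurableSpace Ω] where
  /-- underlying probability measure -/
  μ : Measure Ω
  prob : IsProbabilityMeasure μ
  /-- consumption upper bounds -/
  dbar : Fin K → ℝ
  dbar_pos : ∀ i, 0 < dbar i
  /-- device utility functions -/
  U : Fin K → ℝ → ℝ
  U_strictConcave : ∀ i, StrictConcaveOn ℝ (Icc 0 (dbar i)) (U i)
  U_strictMono : ∀ i, StrictMonoOn (U i) (Icc 0 (dbar i))
  U_diff : ∀ i, ∀ x ∈ Icc 0 (dbar i), DifferentiableWithinAt ℝ (U i) (Icc 0 (dbar i)) x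
  U_contDeriv : ∀ i, ContinuousOn (fun x => derivWithin (U i) (Icc 0 (dbar i)) x) (Icc 0 (dbar i))
  U_zero : ∀ i, U i 0 = 0
  /-- renewable processes -/
  r : ℕ → Ω → ℝ
  r_meas : ∀ t, Measurable (r t)
  r_nonneg : ∀ t ω, 0 ≤ r t ω
  r_int : ∀ t, Integrable (r t) μ
  r_indep : ProbabilityTheory.iIndepFun r μ
  /-- time-of-use buy prices `π_t⁺` -/
  pip : ℕ → ℝ
  /-- time-of-use sell prices `π_t⁻` -/
  pim : ℕ → ℝ
  /-- maximal per-period EV charge -/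
  vbar : ℝ
  vbar_pos : 0 < vbar
  /-- per-unit penalty for unmet EV demand at the horizon -/
  γ : ℝ
  /-- `π_off⁻ = min_t π_t⁻` -/
  pioff : ℝ
  pioff_le : ∀ t < T, pioff ≤ pim t
  pioff_attained : ∃ t < T, pioff = pim t
  /-- assumption A1 -/
  A1 : ∀ t < T, 0 < pim t ∧ pim t ≤ pip t ∧ pip t < γ

namespace EVModel

variable {K T : ℕ} {Ω : Type} [MeasurableSpace Ω]

/-- Stage reward `g_t(x_t, v, d)`. -/
noncomputable def stage (M : EVModel K T Ω) (t : ℕ) (rt v : ℝ) (d : Fin K → ℝ) : ℝ :=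
  ∑ i, M.U i (d i) - NEMPayment (M.pip t) (M.pim t) (v + ∑ i, d i - rt)

/-- Feasible decisions `(v, d)` given remaining demand `y`. -/
def feas (M : EVModel K T Ω) (y : ℝ) : Set (ℝ × (Fin K → ℝ)) :=
  {p | p.1 ∈ Icc 0 (min M.vbar y) ∧ ∀ i, p.2 i ∈ Icc 0 (M.dbar i)}

/-- Value function indexed by `k = T - 1 - t`, the number of remaining periods after
the current one. -/
noncomputable def W (M : EVModel K T Ω) : ℕ → ℝ → ℝ → ℝ
  | 0 => fun y rt => sSup ((fun p : ℝ × (Fin K → ℝ) =>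
      M.stage (T - 1) rt p.1 p.2 - M.γ * (y - p.1)) '' M.feas y)
  | (k + 1) => fun y rt => sSup ((fun p : ℝ × (Fin K → ℝ) =>
      M.stage (T - 2 - k) rt p.1 p.2 +
        ∫ ω, M.W k (y - p.1) (M.r (T - 1 - k) ω) ∂M.μ) '' M.feas y)

/-- Value function `V_t(y, r_t)` (the price argument is determined by `t`). -/
noncomputable def V (M : EVModel K T Ω) (t : ℕ) (y rt : ℝ) : ℝ := M.W (T - 1 - t) y rt

/-- Expected value function `V̄_t(y) = E[V_t(y, r_t, π_t)]`. -/
noncomputable def Vbar (M : EVModel K T Ω) (t : ℕ) (y : ℝ) : ℝ := ∫ ω, M.V t y (M.r t ω) ∂M.μ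

/-- Objective of the Bellman equation at time `t` in state `(y, rt)`. -/
noncomputable def bellObj (M : EVModel K T Ω) (t : ℕ) (y rt : ℝ) (p : ℝ × (Fin K → ℝ)) : ℝ :=
  if t = T - 1 then M.stage t rt p.1 p.2 - M.γ * (y - p.1)
  else M.stage t rt p.1 p.2 + ∫ ω, M.V (t + 1) (y - p.1) (M.r (t + 1) ω) ∂M.μ

/-- `(v, d)` is an optimal solution of the Bellman equation at time `t`. -/
def IsBellmanOpt (M : EVModel K T Ω) (t : ℕ) (y rt : ℝ) (p : ℝ × (Fin K → ℝ)) : Prop :=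
  p ∈ M.feas y ∧ ∀ q ∈ M.feas y, M.bellObj t y rt q ≤ M.bellObj t y rt p

/-- Superdifferential `h_t` of the concave expected value function `V̄_t`. -/
noncomputable def h (M : EVModel K T Ω) (t : ℕ) (y : ℝ) : Set ℝ := superdiff (M.Vbar t) y

end EVModel

section AuxDecoupling
open Set Filter Topology MeasureTheory

section ConcaveCalc
variable {D : ℝ} {f f' : ℝ → ℝ}

/-- slope comparison: concave, a < u < b all in Icc 0 D :
  slope(a,b) ≤ slope(a,u) and slope(u,b) ≤ slope(a,b). -/
lemma conc_slope_right (hf : ConcaveOn ℝ (Icc 0 D) f) {a u b : ℝ}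
    (ha : a ∈ Icc 0 D) (hb : b ∈ Icc 0 D) (hau : a < u) (hub : u < b) :
    (f b - f a) / (b - a) ≤ (f u - f a) / (u - a) := by
  have h := hf.slope_anti_adjacent ha hb hau hub
  have hau' : (0:ℝ) < u - a := by linarith
  have hub' : (0:ℝ) < b - u := by linarith
  have hab' : (0:ℝ) < b - a := by linarith
  rw [div_le_div_iff₀ hab' hau']
  have h2 : (f b - f u) * (u - a) ≤ (f u - f a) * (b - u) := by
    rw [div_le_div_iff₀ hub' hau'] at h; linarith
  nlinarith

lemma conc_slope_left (hf : ConcaveOn ℝ (Icc 0 D) f) {a u b : ℝ}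
    (ha : a ∈ Icc 0 D) (hb : b ∈ Icc 0 D) (hau : a < u) (hub : u < b) :
    (f b - f u) / (b - u) ≤ (f b - f a) / (b - a) := by
  have h := hf.slope_anti_adjacent ha hb hau hub
  have hau' : (0:ℝ) < u - a := by linarith
  have hub' : (0:ℝ) < b - u := by linarith
  have hab' : (0:ℝ) < b - a := by linarith
  rw [div_le_div_iff₀ hub' hab']
  have h2 : (f b - f u) * (u - a) ≤ (f u - f a) * (b - u) := by
    rw [div_le_div_iff₀ hub' hau'] at h; linarith
  nlinarith

/-- gradient inequality, upper: f b - f a ≤ f' a * (b - a) for a < b. -/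
lemma conc_grad_upper (hf : ConcaveOn ℝ (Icc 0 D) f)
    (hder : ∀ x ∈ Icc 0 D, HasDerivWithinAt f (f' x) (Icc 0 D) x)
    {a b : ℝ} (ha : a ∈ Icc 0 D) (hb : b ∈ Icc 0 D) (hab : a < b) :
    f b - f a ≤ f' a * (b - a) := by
  have T : Tendsto (slope f a) (𝓝[Icc 0 D \ {a}] a) (𝓝 (f' a)) :=
    hasDerivWithinAt_iff_tendsto_slope.mp (hder a ha)
  have hsub : Ioc a b ⊆ Icc 0 D \ {a} := by
    intro u hu
    exact ⟨⟨le_trans ha.1 hu.1.le, le_trans hu.2 hb.2⟩, ne_of_gt hu.1⟩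
  have T' : Tendsto (slope f a) (𝓝[Ioc a b] a) (𝓝 (f' a)) :=
    T.mono_left (nhdsWithin_mono _ hsub)
  haveI : (𝓝[Ioc a b] a).NeBot := left_nhdsWithin_Ioc_neBot hab
  have hev : ∀ᶠ u in 𝓝[Ioc a b] a, (f b - f a) / (b - a) ≤ slope f a u := by
    filter_upwards [self_mem_nhdsWithin] with u hu
    rw [slope_def_field]
    rcases eq_or_lt_of_le hu.2 with h | h
    · subst h; rfl
    · exact conc_slope_right hf ha hb hu.1 h
  have := ge_of_tendsto T' hev
  have hba : (0:ℝ) < b - a := by linarith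
  calc f b - f a = ((f b - f a)/(b-a)) * (b - a) := by field_simp
  _ ≤ f' a * (b - a) := by apply mul_le_mul_of_nonneg_right this hba.le

/-- gradient inequality, lower: f' b * (b - a) ≤ f b - f a for a < b. -/
lemma conc_grad_lower (hf : ConcaveOn ℝ (Icc 0 D) f)
    (hder : ∀ x ∈ Icc 0 D, HasDerivWithinAt f (f' x) (Icc 0 D) x)
    {a b : ℝ} (ha : a ∈ Icc 0 D) (hb : b ∈ Icc 0 D) (hab : a < b) :
    f' b * (b - a) ≤ f b - f a := by
  have T : Tendsto (slope f b) (𝓝[Icc 0 D \ {b}] b) (𝓝 (f' b)) :=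
    hasDerivWithinAt_iff_tendsto_slope.mp (hder b hb)
  have hsub : Ico a b ⊆ Icc 0 D \ {b} := by
    intro u hu
    exact ⟨⟨le_trans ha.1 hu.1, le_trans hu.2.le hb.2⟩, ne_of_lt hu.2⟩
  have T' : Tendsto (slope f b) (𝓝[Ico a b] b) (𝓝 (f' b)) :=
    T.mono_left (nhdsWithin_mono _ hsub)
  haveI : (𝓝[Ico a b] b).NeBot := right_nhdsWithin_Ico_neBot hab
  have hev : ∀ᶠ u in 𝓝[Ico a b] b, slope f b u ≤ (f b - f a) / (b - a) := by
    filter_upwards [self_mem_nhdsWithin] with u hu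
    rw [slope_comm, slope_def_field]
    rcases eq_or_lt_of_le hu.1 with h | h
    · subst h; rfl
    · exact conc_slope_left hf ha hb h hu.2
  have := le_of_tendsto T' hev
  have hba : (0:ℝ) < b - a := by linarith
  calc f' b * (b - a) ≤ ((f b - f a)/(b-a)) * (b - a) := by
        apply mul_le_mul_of_nonneg_right this hba.le
  _ = f b - f a := by field_simp

/-- strict antitonicity of the derivative of a strictly concave function. -/
lemma strict_conc_deriv_anti (hf : StrictConcaveOn ℝ (Icc 0 D) f)
    (hder : ∀ x ∈ Icc 0 D, HasDerivWithinAt f (f' x) (Icc 0 D) x)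
    {a b : ℝ} (ha : a ∈ Icc 0 D) (hb : b ∈ Icc 0 D) (hab : a < b) :
    f' b < f' a := by
  set m := (a + b) / 2 with hm
  have ham : a < m := by simp only [hm]; linarith
  have hmb : m < b := by simp only [hm]; linarith
  have hmI : m ∈ Icc 0 D := ⟨le_trans ha.1 ham.le, le_trans hmb.le hb.2⟩
  have h1 : (f m - f a) / (m - a) ≤ f' a := by
    have := conc_grad_upper hf.concaveOn hder ha hmI ham
    rw [div_le_iff₀ (by linarith)]; linarith
  have h2 : f' b ≤ (f b - f m) / (b - m) := by
    have := conc_grad_lower hf.concaveOn hder hmI hb hmb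
    rw [le_div_iff₀ (by linarith)]; linarith
  have h3 := hf.slope_anti_adjacent ha hb ham hmb
  linarith

end ConcaveCalc

section Device
variable {D : ℝ} {U L lv : ℝ → ℝ}

lemma phi_sconc (hU : StrictConcaveOn ℝ (Icc 0 D) U) (μ : ℝ) :
    StrictConcaveOn ℝ (Icc 0 D) (fun x => U x - μ * x) := by
  apply hU.add_concaveOn
  refine ⟨convex_Icc 0 D, ?_⟩
  intro x _ y _ a b _ _ _
  simp only [smul_eq_mul]
  apply le_of_eq; ring

lemma phi_deriv (hL : ∀ x ∈ Icc 0 D, HasDerivWithinAt U (L x) (Icc 0 D) x)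
    (μ : ℝ) : ∀ x ∈ Icc 0 D,
      HasDerivWithinAt (fun x => U x - μ * x) (L x - μ) (Icc 0 D) x := by
  intro x hx
  have h2 : HasDerivWithinAt (fun x : ℝ => μ * x) (μ * 1) (Icc 0 D) x :=
    (hasDerivWithinAt_id x _).const_mul μ
  have := (hL x hx).sub h2
  simp only [mul_one] at this
  exact this

lemma phi_max_at (hU : StrictConcaveOn ℝ (Icc 0 D) U)
    (hL : ∀ x ∈ Icc 0 D, HasDerivWithinAt U (L x) (Icc 0 D) x)
    {μ a : ℝ} (haI : a ∈ Icc 0 D)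
    (hcase : (μ ≤ L D ∧ a = D) ∨ (L 0 ≤ μ ∧ a = 0) ∨ L a = μ) :
    ∀ b ∈ Icc 0 D, U b - μ * b ≤ U a - μ * a := by
  intro b hb
  have hconc := (phi_sconc hU μ).concaveOn
  have hder := phi_deriv hL μ
  rcases lt_trichotomy a b with h | h | h
  · have := conc_grad_upper hconc hder haI hb h
    have hLa : L a ≤ μ := by
      rcases hcase with ⟨h1, h2⟩ | ⟨h1, h2⟩ | h1
      · exfalso; subst h2; exact absurd hb.2 (not_le.mpr h)
      · subst h2; exact h1
      · exact le_of_eq h1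
    nlinarith
  · subst h; rfl
  · have := conc_grad_lower hconc hder hb haI h
    have hLa : μ ≤ L a := by
      rcases hcase with ⟨h1, h2⟩ | ⟨h1, h2⟩ | h1
      · subst h2; exact h1
      · exfalso; subst h2; exact absurd hb.1 (not_le.mpr h)
      · exact ge_of_eq h1
    nlinarith

lemma phi_max_unique (hU : StrictConcaveOn ℝ (Icc 0 D) U) {μ a b : ℝ}
    (haI : a ∈ Icc 0 D) (hbI : b ∈ Icc 0 D)
    (hamax : ∀ c ∈ Icc 0 D, U c - μ * c ≤ U a - μ * a)
    (hbmax : ∀ c ∈ Icc 0 D, U c - μ * c ≤ U b - μ * b) : a = b := by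
  by_contra hne
  set φ := fun x => U x - μ * x with hφ
  have heq : φ a = φ b := le_antisymm (hbmax a haI) (hamax b hbI)
  have hsc := phi_sconc hU μ
  have hmid := hsc.2 haI hbI hne (by norm_num : (0:ℝ) < 1/2) (by norm_num : (0:ℝ) < 1/2)
    (by norm_num)
  have hmI : (1/2 : ℝ) • a + (1/2 : ℝ) • b ∈ Icc 0 D :=
    (convex_Icc 0 D) haI hbI (by norm_num) (by norm_num) (by norm_num)
  have := hamax _ hmI
  simp only [smul_eq_mul, hφ] at hmid this heq
  linarith

/-- `lv μ` is a maximizer of `x ↦ U x - μ x` on `[0, D]`. -/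
lemma l_is_max (hD : 0 < D) (hU : StrictConcaveOn ℝ (Icc 0 D) U)
    (hL : ∀ x ∈ Icc 0 D, HasDerivWithinAt U (L x) (Icc 0 D) x)
    (hl_mem : ∀ π, lv π ∈ Icc 0 D)
    (hl_hi : ∀ π, π ≤ L D → lv π = D)
    (hl_lo : ∀ π, L 0 ≤ π → lv π = 0)
    (hl_mid : ∀ π, L D < π → π < L 0 → L (lv π) = π)
    (μ : ℝ) : ∀ b ∈ Icc 0 D, U b - μ * b ≤ U (lv μ) - μ * (lv μ) := by
  rcases le_or_gt μ (L D) with h | h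
  · exact phi_max_at hU hL (hl_mem μ) (Or.inl ⟨h, hl_hi μ h⟩)
  · rcases le_or_gt (L 0) μ with h2 | h2
    · exact phi_max_at hU hL (hl_mem μ) (Or.inr (Or.inl ⟨h2, hl_lo μ h2⟩))
    · exact phi_max_at hU hL (hl_mem μ) (Or.inr (Or.inr (hl_mid μ h h2)))

/-- if `a` maximizes `x ↦ U x - μ x` on `[0,D]` then `a = lv μ`. -/
lemma eq_l_of_max (hD : 0 < D) (hU : StrictConcaveOn ℝ (Icc 0 D) U)
    (hL : ∀ x ∈ Icc 0 D, HasDerivWithinAt U (L x) (Icc 0 D) x)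
    (hl_mem : ∀ π, lv π ∈ Icc 0 D)
    (hl_hi : ∀ π, π ≤ L D → lv π = D)
    (hl_lo : ∀ π, L 0 ≤ π → lv π = 0)
    (hl_mid : ∀ π, L D < π → π < L 0 → L (lv π) = π)
    {μ a : ℝ} (haI : a ∈ Icc 0 D)
    (hamax : ∀ c ∈ Icc 0 D, U c - μ * c ≤ U a - μ * a) : a = lv μ :=
  phi_max_unique hU haI (hl_mem μ) hamax
    (l_is_max hD hU hL hl_mem hl_hi hl_lo hl_mid μ)

/-- antitonicity of `lv`. -/
lemma l_anti (hD : 0 < D) (hU : StrictConcaveOn ℝ (Icc 0 D) U)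
    (hL : ∀ x ∈ Icc 0 D, HasDerivWithinAt U (L x) (Icc 0 D) x)
    (hl_mem : ∀ π, lv π ∈ Icc 0 D)
    (hl_hi : ∀ π, π ≤ L D → lv π = D)
    (hl_lo : ∀ π, L 0 ≤ π → lv π = 0)
    (hl_mid : ∀ π, L D < π → π < L 0 → L (lv π) = π)
    {μ μ' : ℝ} (h : μ ≤ μ') : lv μ' ≤ lv μ := by
  rcases eq_or_lt_of_le h with rfl | h
  · exact le_refl _
  · have h1 := l_is_max hD hU hL hl_mem hl_hi hl_lo hl_mid μ (lv μ') (hl_mem μ')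
    have h2 := l_is_max hD hU hL hl_mem hl_hi hl_lo hl_mid μ' (lv μ) (hl_mem μ)
    nlinarith

end Device


lemma NEM_of_nonneg {pp pm z : ℝ} (h : 0 ≤ z) : NEMPayment pp pm z = pp * z := by
  unfold NEMPayment
  rw [max_eq_left h, max_eq_right (by linarith : -z ≤ 0)]
  ring

lemma NEM_of_nonpos {pp pm z : ℝ} (h : z ≤ 0) : NEMPayment pp pm z = pm * z := by
  unfold NEMPayment
  rw [max_eq_right h, max_eq_left (by linarith : 0 ≤ -z)]
  ring

lemma NEM_eq {pp pm z : ℝ} : NEMPayment pp pm z = (pp - pm) * max z 0 + pm * z := by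
  rcases le_total z 0 with h | h
  · rw [NEM_of_nonpos h, max_eq_right h]; ring
  · rw [NEM_of_nonneg h, max_eq_left h]; ring

section Chord
variable {D : ℝ} {U L : ℝ → ℝ}

/-- If chords to the right of `a` have slope at most `c`, then `L a ≤ c`. -/
lemma L_le_of_chord (hU : StrictConcaveOn ℝ (Icc 0 D) U)
    (hL : ∀ x ∈ Icc 0 D, HasDerivWithinAt U (L x) (Icc 0 D) x)
    (hLc : ContinuousOn L (Icc 0 D))
    {a m c : ℝ} (haI : a ∈ Icc 0 D) (ham : a < m) (hmD : m ≤ D)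
    (hch : ∀ b, a < b → b ≤ m → U b - U a ≤ c * (b - a)) : L a ≤ c := by
  have hsub : Ioc a m ⊆ Icc 0 D := fun u hu =>
    ⟨le_trans haI.1 hu.1.le, le_trans hu.2 hmD⟩
  have T : Tendsto L (𝓝[Ioc a m] a) (𝓝 (L a)) :=
    (hLc a haI).mono_left (nhdsWithin_mono _ hsub)
  haveI : (𝓝[Ioc a m] a).NeBot := left_nhdsWithin_Ioc_neBot ham
  refine le_of_tendsto T ?_
  filter_upwards [self_mem_nhdsWithin] with u hu
  -- L u ≤ c for u ∈ Ioc a m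
  have huI : u ∈ Icc 0 D := hsub hu
  have h1 := conc_grad_lower hU.concaveOn hL haI huI hu.1
  have h2 := hch u hu.1 hu.2
  nlinarith [hu.1]

/-- If chords to the left of `a` have slope at least `c`, then `c ≤ L a`. -/
lemma L_ge_of_chord (hU : StrictConcaveOn ℝ (Icc 0 D) U)
    (hL : ∀ x ∈ Icc 0 D, HasDerivWithinAt U (L x) (Icc 0 D) x)
    (hLc : ContinuousOn L (Icc 0 D))
    {a m c : ℝ} (haI : a ∈ Icc 0 D) (hma : m < a) (hm0 : 0 ≤ m)
    (hch : ∀ b, m ≤ b → b < a → c * (a - b) ≤ U a - U b) : c ≤ L a := by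
  have hsub : Ico m a ⊆ Icc 0 D := fun u hu =>
    ⟨le_trans hm0 hu.1, le_trans hu.2.le haI.2⟩
  have T : Tendsto L (𝓝[Ico m a] a) (𝓝 (L a)) :=
    (hLc a haI).mono_left (nhdsWithin_mono _ hsub)
  haveI : (𝓝[Ico m a] a).NeBot := right_nhdsWithin_Ico_neBot hma
  refine ge_of_tendsto T ?_
  filter_upwards [self_mem_nhdsWithin] with u hu
  have huI : u ∈ Icc 0 D := hsub hu
  have h1 := conc_grad_upper hU.concaveOn hL huI haI hu.2
  have h2 := hch u hu.1 hu.2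
  nlinarith [hu.2]

/-- injectivity of `L` on `Icc 0 D`. -/
lemma L_injOn (hU : StrictConcaveOn ℝ (Icc 0 D) U)
    (hL : ∀ x ∈ Icc 0 D, HasDerivWithinAt U (L x) (Icc 0 D) x)
    {a b : ℝ} (haI : a ∈ Icc 0 D) (hbI : b ∈ Icc 0 D) (h : L a = L b) : a = b := by
  rcases lt_trichotomy a b with hl | hl | hl
  · exact absurd h (ne_of_gt (strict_conc_deriv_anti hU hL haI hbI hl))
  · exact hl
  · exact absurd h (ne_of_lt (strict_conc_deriv_anti hU hL hbI haI hl))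

end Chord

section Static

lemma sum_update' {K : ℕ} (d : Fin K → ℝ) (i : Fin K) (x : ℝ) :
    ∑ j, Function.update d i x j = (∑ j, d j) + (x - d i) := by
  classical
  have h : ∀ j, Function.update d i x j = d j + (if j = i then x - d i else 0) := by
    intro j
    rcases eq_or_ne j i with rfl | h
    · simp
    · simp [Function.update_of_ne h, h]
  rw [Finset.sum_congr rfl (fun j _ => h j), Finset.sum_add_distrib,
    Finset.sum_ite_eq' Finset.univ i (fun _ => x - d i)]
  simp

lemma sum_U_update {K : ℕ} (U : Fin K → ℝ → ℝ) (d : Fin K → ℝ) (i : Fin K) (x : ℝ) :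
    ∑ j, U j (Function.update d i x j) = (∑ j, U j (d j)) + (U i x - U i (d i)) := by
  classical
  have h : ∀ j, U j (Function.update d i x j)
      = U j (d j) + (if j = i then U i x - U i (d i) else 0) := by
    intro j
    rcases eq_or_ne j i with rfl | h
    · simp
    · simp [Function.update_of_ne h, h]
  rw [Finset.sum_congr rfl (fun j _ => h j), Finset.sum_add_distrib,
    Finset.sum_ite_eq' Finset.univ i (fun _ => U i x - U i (d i))]
  simp

set_option maxHeartbeats 1000000 in
theorem static_opt {K : ℕ} (dbar : Fin K → ℝ) (hd : ∀ i, 0 < dbar i)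
    (U : Fin K → ℝ → ℝ) (hU : ∀ i, StrictConcaveOn ℝ (Icc 0 (dbar i)) (U i))
    (L : Fin K → ℝ → ℝ)
    (hL : ∀ i, ∀ x ∈ Icc 0 (dbar i), HasDerivWithinAt (U i) (L i x) (Icc 0 (dbar i)) x)
    (hLc : ∀ i, ContinuousOn (L i) (Icc 0 (dbar i)))
    (l : Fin K → ℝ → ℝ)
    (hl_mem : ∀ i π, l i π ∈ Icc 0 (dbar i))
    (hl_hi : ∀ i π, π ≤ L i (dbar i) → l i π = dbar i)
    (hl_lo : ∀ i π, L i 0 ≤ π → l i π = 0)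
    (hl_mid : ∀ i π, L i (dbar i) < π → π < L i 0 → L i (l i π) = π)
    (pp pm : ℝ) (hpm : 0 < pm) (hpmp : pm ≤ pp)
    (R : ℝ)
    (d : Fin K → ℝ) (hdm : ∀ i, d i ∈ Icc 0 (dbar i))
    (hopt : ∀ d' : Fin K → ℝ, (∀ i, d' i ∈ Icc 0 (dbar i)) →
      (∑ i, U i (d' i)) - NEMPayment pp pm ((∑ i, d' i) - R) ≤
      (∑ i, U i (d i)) - NEMPayment pp pm ((∑ i, d i) - R)) :
    (R < ∑ i, l i pp → ∀ i, d i = l i pp) ∧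
      ((∑ i, l i pm) < R → ∀ i, d i = l i pm) ∧
      ((∑ i, l i pp) ≤ R → R ≤ ∑ i, l i pm →
        ∃ ν ∈ Icc pm pp, (∑ i, l i ν) = R ∧ ∀ i, d i = l i ν) := by
  classical
  set z : ℝ := (∑ i, d i) - R with hzdef
  clear_value z
  -- Case z > 0 : d = l pp
  have hpos : 0 < z → ∀ i, d i = l i pp := by
    intro hz i
    apply eq_l_of_max (hd i) (hU i) (hL i) (hl_mem i) (hl_hi i) (hl_lo i) (hl_mid i)
      (hdm i)
    intro b hb
    set θ : ℝ := min (1/2) (z / (2 * (|b - d i| + 1))) with hθdef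
    clear_value θ
    have habs : (0:ℝ) ≤ |b - d i| := abs_nonneg _
    have hθpos : 0 < θ := by rw [hθdef]; exact lt_min (by norm_num) (div_pos hz (by positivity))
    have hθhalf : θ ≤ 1/2 := by rw [hθdef]; exact min_le_left _ _
    have hθb : θ * |b - d i| ≤ z / 2 := by
      have h1 : θ ≤ z / (2 * (|b - d i| + 1)) := by rw [hθdef]; exact min_le_right _ _
      have h2 : θ * |b - d i| ≤ (z / (2 * (|b - d i| + 1))) * |b - d i| :=
        mul_le_mul_of_nonneg_right h1 habs
      refine h2.trans ?_
      rw [div_mul_eq_mul_div, div_le_div_iff₀ (by positivity) (by norm_num)]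
      nlinarith
    set x : ℝ := d i + θ * (b - d i) with hxdef
    clear_value x
    have hxI : x ∈ Icc 0 (dbar i) := by
      have := (convex_Icc (0:ℝ) (dbar i)) (hdm i) hb
        (by linarith : (0:ℝ) ≤ 1 - θ) hθpos.le (by ring)
      simpa [smul_eq_mul, hxdef, show (1-θ) * d i + θ * b = d i + θ * (b - d i) by ring]
        using this
    have hfeas : ∀ j, Function.update d i x j ∈ Icc 0 (dbar j) := by
      intro j
      rcases eq_or_ne j i with rfl | hji
      · simpa using hxI
      · simpa [Function.update_of_ne hji] using hdm j
    have hsum : (∑ j, Function.update d i x j) = (∑ j, d j) + θ * (b - d i) := by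
      rw [sum_update' d i x]; rw [hxdef]; ring
    have hθbd : -(z/2) ≤ θ * (b - d i) := by
      have : -(θ * |b - d i|) ≤ θ * (b - d i) := by
        have := neg_abs_le (b - d i)
        nlinarith
      linarith
    have hz' : (0:ℝ) < (∑ j, Function.update d i x j) - R := by
      rw [hsum]; linarith [hzdef]
    have hF := hopt _ hfeas
    rw [sum_U_update, NEM_of_nonneg hz'.le, hsum,
      NEM_of_nonneg (by linarith : (0:ℝ) ≤ z)] at hF
    have hstep : U i x - U i (d i) - pp * (θ * (b - d i)) ≤ 0 := by
      have he : (∑ j, d j) + θ * (b - d i) - R = z + θ * (b - d i) := by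
        rw [hzdef]; ring
      rw [he] at hF
      nlinarith [hF]
    have hconc : (1-θ) * U i (d i) + θ * U i b ≤ U i x := by
      have := (hU i).concaveOn.2 (hdm i) hb
        (by linarith : (0:ℝ) ≤ 1 - θ)
        hθpos.le (by ring)
      simpa [smul_eq_mul, hxdef, show (1-θ) * d i + θ * b = d i + θ * (b - d i) by ring]
        using this
    nlinarith [hstep, hconc, hθpos]
  -- Case z < 0 : d = l pm
  have hneg : z < 0 → ∀ i, d i = l i pm := by
    intro hz i
    apply eq_l_of_max (hd i) (hU i) (hL i) (hl_mem i) (hl_hi i) (hl_lo i) (hl_mid i)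
      (hdm i)
    intro b hb
    set θ : ℝ := min (1/2) ((-z) / (2 * (|b - d i| + 1))) with hθdef
    clear_value θ
    have habs : (0:ℝ) ≤ |b - d i| := abs_nonneg _
    have hθpos : 0 < θ := by rw [hθdef]; exact lt_min (by norm_num) (div_pos (by linarith) (by positivity))
    have hθhalf : θ ≤ 1/2 := by rw [hθdef]; exact min_le_left _ _
    have hθb : θ * |b - d i| ≤ (-z) / 2 := by
      have h1 : θ ≤ (-z) / (2 * (|b - d i| + 1)) := by rw [hθdef]; exact min_le_right _ _
      have h2 : θ * |b - d i| ≤ ((-z) / (2 * (|b - d i| + 1))) * |b - d i| :=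
        mul_le_mul_of_nonneg_right h1 habs
      refine h2.trans ?_
      rw [div_mul_eq_mul_div, div_le_div_iff₀ (by positivity) (by norm_num)]
      nlinarith
    set x : ℝ := d i + θ * (b - d i) with hxdef
    clear_value x
    have hxI : x ∈ Icc 0 (dbar i) := by
      have := (convex_Icc (0:ℝ) (dbar i)) (hdm i) hb
        (by linarith : (0:ℝ) ≤ 1 - θ) hθpos.le (by ring)
      simpa [smul_eq_mul, hxdef, show (1-θ) * d i + θ * b = d i + θ * (b - d i) by ring]
        using this
    have hfeas : ∀ j, Function.update d i x j ∈ Icc 0 (dbar j) := by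
      intro j
      rcases eq_or_ne j i with rfl | hji
      · simpa using hxI
      · simpa [Function.update_of_ne hji] using hdm j
    have hsum : (∑ j, Function.update d i x j) = (∑ j, d j) + θ * (b - d i) := by
      rw [sum_update' d i x]; rw [hxdef]; ring
    have hθbd : θ * (b - d i) ≤ (-z)/2 := by
      have : θ * (b - d i) ≤ θ * |b - d i| := by
        have := le_abs_self (b - d i)
        nlinarith
      linarith
    have hz' : (∑ j, Function.update d i x j) - R ≤ 0 := by
      rw [hsum]; linarith [hzdef]
    have hF := hopt _ hfeas
    rw [sum_U_update, NEM_of_nonpos hz', hsum,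
      NEM_of_nonpos (by linarith : z ≤ 0)] at hF
    have hstep : U i x - U i (d i) - pm * (θ * (b - d i)) ≤ 0 := by
      have he : (∑ j, d j) + θ * (b - d i) - R = z + θ * (b - d i) := by
        rw [hzdef]; ring
      rw [he] at hF
      nlinarith [hF]
    have hconc : (1-θ) * U i (d i) + θ * U i b ≤ U i x := by
      have := (hU i).concaveOn.2 (hdm i) hb
        (by linarith : (0:ℝ) ≤ 1 - θ)
        hθpos.le (by ring)
      simpa [smul_eq_mul, hxdef, show (1-θ) * d i + θ * b = d i + θ * (b - d i) by ring]
        using this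
    nlinarith [hstep, hconc, hθpos]
  -- Case z = 0 : there is a common multiplier ν
  have hzero : z = 0 → ∃ ν ∈ Icc pm pp, (∑ i, l i ν) = R ∧ ∀ i, d i = l i ν := by
    intro hz
    have hsumR : (∑ i, d i) = R := by
      have := hzdef; rw [hz] at this; linarith
    -- chord bounds from single-coordinate perturbations
    have condA : ∀ i, d i < dbar i → L i (d i) ≤ pp := by
      intro i hlt
      apply L_le_of_chord (hU i) (hL i) (hLc i) (hdm i) hlt (le_refl _)
      intro b hb1 hb2
      have hbI : b ∈ Icc 0 (dbar i) := ⟨le_trans (hdm i).1 hb1.le, hb2⟩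
      have hfeas : ∀ j, Function.update d i b j ∈ Icc 0 (dbar j) := by
        intro j
        rcases eq_or_ne j i with rfl | hji
        · simpa using hbI
        · simpa [Function.update_of_ne hji] using hdm j
      have hF := hopt _ hfeas
      rw [sum_U_update, sum_update'] at hF
      have harg : (∑ j, d j) + (b - d i) - R = b - d i := by rw [hsumR]; ring
      rw [harg, NEM_of_nonneg (by linarith : (0:ℝ) ≤ b - d i), hz,
        NEM_of_nonneg le_rfl, mul_zero] at hF
      linarith [hF]
    have condB : ∀ j, 0 < d j → pm ≤ L j (d j) := by
      intro j hpos
      apply L_ge_of_chord (hU j) (hL j) (hLc j) (hdm j) hpos (le_refl 0)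
      intro b hb1 hb2
      have hbI : b ∈ Icc 0 (dbar j) := ⟨hb1, le_trans hb2.le (hdm j).2⟩
      have hfeas : ∀ k, Function.update d j b k ∈ Icc 0 (dbar k) := by
        intro k
        rcases eq_or_ne k j with rfl | hkj
        · simpa using hbI
        · simpa [Function.update_of_ne hkj] using hdm k
      have hF := hopt _ hfeas
      rw [sum_U_update, sum_update'] at hF
      have harg : (∑ k, d k) + (b - d j) - R = b - d j := by rw [hsumR]; ring
      rw [harg, NEM_of_nonpos (by linarith : b - d j ≤ 0), hz,
        NEM_of_nonneg le_rfl, mul_zero] at hF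
      linarith [hF]
    have condAB : ∀ i j, d i < dbar i → 0 < d j → L i (d i) ≤ L j (d j) := by
      intro i j hlt hpos
      rcases eq_or_ne i j with rfl | hij
      · exact le_refl _
      by_contra hcon
      push_neg at hcon
      set c : ℝ := (L i (d i) + L j (d j)) / 2 with hcdef
      clear_value c
      have hc1 : L j (d j) < c := by rw [hcdef]; linarith
      have hc2 : c < L i (d i) := by rw [hcdef]; linarith
      have hcw : ContinuousWithinAt (L j) (Icc 0 (dbar j)) (d j) := (hLc j) _ (hdm j)
      have hpre : (L j) ⁻¹' (Iio c) ∈ 𝓝[Icc 0 (dbar j)] (d j) := hcw (Iio_mem_nhds hc1)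
      obtain ⟨δ, hδ, hball⟩ := Metric.mem_nhdsWithin_iff.mp hpre
      set ε₁ : ℝ := min (min (dbar i - d i) (d j)) (δ/2) with hε₁def
      clear_value ε₁
      have hε₁pos : 0 < ε₁ := by
        rw [hε₁def]; exact lt_min (lt_min (by linarith) hpos) (by linarith)
      have hε₁1 : ε₁ ≤ dbar i - d i := by
        rw [hε₁def]; exact le_trans (min_le_left _ _) (min_le_left _ _)
      have hε₁2 : ε₁ ≤ d j := by
        rw [hε₁def]; exact le_trans (min_le_left _ _) (min_le_right _ _)
      have hε₁3 : ε₁ ≤ δ/2 := by rw [hε₁def]; exact min_le_right _ _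
      have hchord : ∀ b, d i < b → b ≤ d i + ε₁ → U i b - U i (d i) ≤ c * (b - d i) := by
        intro b hb1 hb2
        set ε : ℝ := b - d i with hεdef
        clear_value ε
        have hε : 0 < ε := by rw [hεdef]; linarith
        have hεle : ε ≤ ε₁ := by rw [hεdef]; linarith
        have hbI : b ∈ Icc 0 (dbar i) := ⟨le_trans (hdm i).1 hb1.le, by linarith⟩
        set b2 : ℝ := d j - ε with hb2def
        clear_value b2
        have hb2I : b2 ∈ Icc 0 (dbar j) := ⟨by rw [hb2def]; linarith,
          by rw [hb2def]; linarith [(hdm j).2, hε]⟩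
        have hb2ball : b2 ∈ Metric.ball (d j) δ := by
          rw [Metric.mem_ball, Real.dist_eq]
          rw [hb2def, abs_of_nonpos (by linarith)]
          linarith
        have hLb2 : L j b2 < c := hball ⟨hb2ball, hb2I⟩
        set d1 : Fin K → ℝ := Function.update d i b with hd1def
        clear_value d1
        set d2 : Fin K → ℝ := Function.update d1 j b2 with hd2def
        clear_value d2
        have hd1j : d1 j = d j := by
          rw [hd1def]; exact Function.update_of_ne (Ne.symm hij) _ _
        have hfeas : ∀ k, d2 k ∈ Icc 0 (dbar k) := by
          intro k
          rcases eq_or_ne k j with rfl | hkj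
          · rw [hd2def, Function.update_self]; exact hb2I
          · rw [hd2def, Function.update_of_ne hkj, hd1def]
            rcases eq_or_ne k i with rfl | hki
            · rw [Function.update_self]; exact hbI
            · rw [Function.update_of_ne hki]; exact hdm k
        have hsum2 : (∑ k, d2 k) = ∑ k, d k := by
          have s1 : (∑ k, d2 k) = (∑ k, d1 k) + (b2 - d1 j) := by
            rw [hd2def]; exact sum_update' d1 j b2
          have s2 : (∑ k, d1 k) = (∑ k, d k) + (b - d i) := by
            rw [hd1def]; exact sum_update' d i b
          rw [s1, s2, hd1j]
          linarith [hb2def, hεdef]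
        have hUsum2 : (∑ k, U k (d2 k)) =
            (∑ k, U k (d k)) + (U i b - U i (d i)) + (U j b2 - U j (d j)) := by
          have e1 : (∑ k, U k (d2 k)) = (∑ k, U k (d1 k)) + (U j b2 - U j (d1 j)) := by
            rw [hd2def]; exact sum_U_update U d1 j b2
          have e2 : (∑ k, U k (d1 k)) = (∑ k, U k (d k)) + (U i b - U i (d i)) := by
            rw [hd1def]; exact sum_U_update U d i b
          rw [e1, e2, hd1j]
          try ring
        have hF := hopt d2 hfeas
        rw [hUsum2, hsum2] at hF
        rw [show (∑ k, d k) - R = z from hzdef.symm, hz, NEM_of_nonneg le_rfl,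
          mul_zero] at hF
        have hkey : U i b - U i (d i) ≤ U j (d j) - U j b2 := by linarith [hF]
        have hgrad := conc_grad_upper (hU j).concaveOn (hL j) hb2I (hdm j)
          (by rw [hb2def]; linarith : b2 < d j)
        have : U j (d j) - U j b2 ≤ L j b2 * ε := by
          have harg : d j - b2 = ε := by rw [hb2def]; ring
          rw [harg] at hgrad; linarith
        have : U j (d j) - U j b2 ≤ c * ε := by nlinarith [hLb2, hε]
        have hfin : U i b - U i (d i) ≤ c * ε := by linarith
        rw [hεdef] at hfin ⊢ <;> exact hfin
      have hε₁1' : ε₁ ≤ dbar i - d i := by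
        rw [hε₁def]; exact le_trans (min_le_left _ _) (min_le_left _ _)
      have hLi := L_le_of_chord (hU i) (hL i) (hLc i) (hdm i)
        (by linarith : d i < d i + ε₁) (by linarith : d i + ε₁ ≤ dbar i) hchord
      linarith
    -- build ν
    set Bs : Finset (Fin K) := Finset.univ.filter (fun j => 0 < d j) with hBdef
    set S : Finset ℝ := insert pp (Bs.image (fun j => L j (d j))) with hSdef
    have hSne : S.Nonempty := ⟨pp, Finset.mem_insert_self _ _⟩
    set ν : ℝ := S.min' hSne with hνdef
    clear_value ν
    have hν_pp : ν ≤ pp := by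
      rw [hνdef]; exact Finset.min'_le S pp (Finset.mem_insert_self _ _)
    have hν_pm : pm ≤ ν := by
      have hmem : ν ∈ S := by rw [hνdef]; exact S.min'_mem hSne
      rcases Finset.mem_insert.mp hmem with h | h
      · rw [h]; exact hpmp
      · obtain ⟨j, hj, hLj⟩ := Finset.mem_image.mp h
        have hjpos : 0 < d j := (Finset.mem_filter.mp hj).2
        rw [← hLj]
        exact condB j hjpos
    have hdi : ∀ i, d i = l i ν := by
      intro i
      rcases lt_or_eq_of_le (hdm i).2 with hlt | htop
      · rcases lt_or_eq_of_le (hdm i).1 with hpos | hzero'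
        · -- interior
          have hiB : i ∈ Bs := Finset.mem_filter.mpr ⟨Finset.mem_univ _, hpos⟩
          have h1 : ν ≤ L i (d i) := by
            rw [hνdef]
            exact Finset.min'_le S _
              (Finset.mem_insert_of_mem (Finset.mem_image_of_mem _ hiB))
          have h2 : L i (d i) ≤ ν := by
            rw [hνdef]
            apply Finset.le_min'
            intro x hx
            rcases Finset.mem_insert.mp hx with rfl | hx
            · exact condA i hlt
            · obtain ⟨j, hj, rfl⟩ := Finset.mem_image.mp hx
              exact condAB i j hlt (Finset.mem_filter.mp hj).2
          have hνe : L i (d i) = ν := le_antisymm h2 h1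
          rcases le_or_gt ν (L i (dbar i)) with hc | hc
          · exfalso
            have := strict_conc_deriv_anti (hU i) (hL i) (hdm i)
              (right_mem_Icc.mpr (hd i).le) hlt
            linarith
          · rcases le_or_gt (L i 0) ν with hc2 | hc2
            · exfalso
              have := strict_conc_deriv_anti (hU i) (hL i)
                (left_mem_Icc.mpr (hd i).le) (hdm i) hpos
              linarith
            · have hmid := hl_mid i ν hc hc2
              exact L_injOn (hU i) (hL i) (hdm i) (hl_mem i ν)
                (hνe.trans hmid.symm)
        · -- d i = 0
          have hge : L i 0 ≤ ν := by
            rw [hνdef]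
            apply Finset.le_min'
            intro x hx
            rcases Finset.mem_insert.mp hx with rfl | hx
            · have := condA i hlt; rw [← hzero'] at this; exact this
            · obtain ⟨j, hj, rfl⟩ := Finset.mem_image.mp hx
              have hjpos : 0 < d j := (Finset.mem_filter.mp hj).2
              have := condAB i j hlt hjpos
              rw [← hzero'] at this; exact this
          rw [← hzero', hl_lo i ν hge]
      · -- d i = dbar i
        have hiB : i ∈ Bs := Finset.mem_filter.mpr
          ⟨Finset.mem_univ _, by rw [htop]; exact hd i⟩
        have h1 : ν ≤ L i (d i) := by
          rw [hνdef]
          exact Finset.min'_le S _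
            (Finset.mem_insert_of_mem (Finset.mem_image_of_mem _ hiB))
        rw [htop] at h1 ⊢
        rw [hl_hi i ν h1]
    refine ⟨ν, ⟨hν_pm, hν_pp⟩, ?_, hdi⟩
    rw [← hsumR]
    exact (Finset.sum_congr rfl (fun i _ => (hdi i).symm))
  -- antitonicity of each l i
  have hanti : ∀ (i : Fin K) {μ μ' : ℝ}, μ ≤ μ' → l i μ' ≤ l i μ := by
    intro i μ μ' h
    exact l_anti (hd i) (hU i) (hL i) (hl_mem i) (hl_hi i) (hl_lo i) (hl_mid i) h
  refine ⟨?_, ?_, ?_⟩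
  · -- R < ∑ l pp
    intro hR
    rcases lt_trichotomy z 0 with h | h | h
    · exfalso
      have hd' := hneg h
      have hsum : (∑ i, d i) = ∑ i, l i pm := Finset.sum_congr rfl (fun i _ => hd' i)
      have hle : (∑ i, l i pp) ≤ ∑ i, l i pm :=
        Finset.sum_le_sum (fun i _ => hanti i hpmp)
      rw [hzdef] at h
      linarith
    · exfalso
      obtain ⟨ν, hνI, hνsum, hνd⟩ := hzero h
      have hle : (∑ i, l i pp) ≤ ∑ i, l i ν :=
        Finset.sum_le_sum (fun i _ => hanti i hνI.2)
      linarith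
    · exact hpos h
  · -- ∑ l pm < R
    intro hR
    rcases lt_trichotomy z 0 with h | h | h
    · exact hneg h
    · exfalso
      obtain ⟨ν, hνI, hνsum, hνd⟩ := hzero h
      have hle : (∑ i, l i ν) ≤ ∑ i, l i pm :=
        Finset.sum_le_sum (fun i _ => hanti i hνI.1)
      linarith
    · exfalso
      have hd' := hpos h
      have hsum : (∑ i, d i) = ∑ i, l i pp := Finset.sum_congr rfl (fun i _ => hd' i)
      have hle : (∑ i, l i pp) ≤ ∑ i, l i pm :=
        Finset.sum_le_sum (fun i _ => hanti i hpmp)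
      rw [hzdef] at h
      linarith
  · -- middle
    intro hR1 hR2
    rcases lt_trichotomy z 0 with h | h | h
    · exfalso
      have hd' := hneg h
      have hsum : (∑ i, d i) = ∑ i, l i pm := Finset.sum_congr rfl (fun i _ => hd' i)
      rw [hzdef] at h
      linarith
    · exact hzero h
    · exfalso
      have hd' := hpos h
      have hsum : (∑ i, d i) = ∑ i, l i pp := Finset.sum_congr rfl (fun i _ => hd' i)
      rw [hzdef] at h
      linarith

end Static

section DP

lemma NEM_mono_lip {pp pm a b : ℝ} (hab : a ≤ b) (h0 : 0 ≤ pm) (h1 : pm ≤ pp) :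
    NEMPayment pp pm b - NEMPayment pp pm a ≤ pp * (b - a) := by
  rw [NEM_eq, NEM_eq]
  have h2 : max a 0 ≤ max b 0 := max_le_max hab le_rfl
  have h3 : max b 0 ≤ max a 0 + (b - a) := by
    apply max_le
    · have := le_max_left a 0; linarith
    · have := le_max_right a 0; linarith
  nlinarith

lemma NEM_lip {pp pm a b : ℝ} (h0 : 0 ≤ pm) (h1 : pm ≤ pp) :
    |NEMPayment pp pm a - NEMPayment pp pm b| ≤ pp * |a - b| := by
  have hab := abs_le.mp (abs_max_sub_max_le_abs a b 0)
  have hab2 := abs_le.mp (le_refl |a - b|)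
  have h5 := le_abs_self (a - b)
  have h6 := neg_abs_le (a - b)
  rw [NEM_eq, NEM_eq]
  rw [abs_le]
  constructor
  · nlinarith [hab.1, hab.2]
  · nlinarith [hab.1, hab.2]

lemma NEM_shift {pp pm : ℝ} (vb rt s : ℝ) (hs : 0 ≤ s) :
    NEMPayment pp pm (vb + s - rt) =
      NEMPayment pp pm (s - max (rt - vb) 0) +
        (if vb ≤ rt then 0 else pp * (vb - rt)) := by
  rcases le_or_gt vb rt with h | h
  · rw [if_pos h, max_eq_left (by linarith : (0:ℝ) ≤ rt - vb),
      show vb + s - rt = s - (rt - vb) by ring]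
    ring
  · rw [if_neg (not_le.mpr h), max_eq_right (by linarith : rt - vb ≤ (0:ℝ)), sub_zero,
      NEM_of_nonneg (by linarith : (0:ℝ) ≤ vb + s - rt), NEM_of_nonneg hs]
    ring

variable {K T : ℕ} {Ω : Type} [MeasurableSpace Ω]

/-- total maximal utility -/
noncomputable def Bsum (M : EVModel K T Ω) : ℝ := ∑ i, M.U i (M.dbar i)

lemma U_le_top (M : EVModel K T Ω) (i : Fin K) {x : ℝ} (hx : x ∈ Icc 0 (M.dbar i)) :
    M.U i x ≤ M.U i (M.dbar i) :=
  (M.U_strictMono i).monotoneOn hx (right_mem_Icc.mpr (M.dbar_pos i).le) hx.2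

lemma U_nonneg (M : EVModel K T Ω) (i : Fin K) {x : ℝ} (hx : x ∈ Icc 0 (M.dbar i)) :
    0 ≤ M.U i x := by
  have := (M.U_strictMono i).monotoneOn (left_mem_Icc.mpr (M.dbar_pos i).le) hx hx.1
  rwa [M.U_zero i] at this

lemma Bsum_nonneg (M : EVModel K T Ω) : 0 ≤ Bsum M :=
  Finset.sum_nonneg fun i _ => U_nonneg M i (right_mem_Icc.mpr (M.dbar_pos i).le)

lemma gamma_pos (M : EVModel K T Ω) (hT : 0 < T) : 0 < M.γ := by
  obtain ⟨h1, h2, h3⟩ := M.A1 0 hT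
  linarith

/-- recursive upper bound constant -/
noncomputable def Cb (M : EVModel K T Ω) : ℕ → ℝ
  | 0 => Bsum M
  | (k+1) => Bsum M + M.γ * (∫ ω, M.r (T - 1 - k) ω ∂M.μ) + Cb M k

lemma Cb_nonneg (M : EVModel K T Ω) (hT : 0 < T) : ∀ k, 0 ≤ Cb M k := by
  intro k
  induction k with
  | zero => exact Bsum_nonneg M
  | succ k ih =>
    have h1 : 0 ≤ ∫ ω, M.r (T - 1 - k) ω ∂M.μ :=
      integral_nonneg (fun ω => M.r_nonneg _ ω)
    have := gamma_pos M hT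
    have h2 : 0 ≤ M.γ * ∫ ω, M.r (T - 1 - k) ω ∂M.μ := mul_nonneg this.le h1
    simp only [Cb]
    linarith [Bsum_nonneg M]

lemma stage_le (M : EVModel K T Ω) {t' : ℕ} (ht' : t' < T) (rt v : ℝ)
    (d : Fin K → ℝ) (hv : 0 ≤ v) (hd : ∀ i, d i ∈ Icc 0 (M.dbar i)) :
    M.stage t' rt v d ≤ Bsum M + M.γ * |rt| := by
  obtain ⟨h1, h2, h3⟩ := M.A1 t' ht'
  have hsumU : (∑ i, M.U i (d i)) ≤ Bsum M :=
    Finset.sum_le_sum fun i _ => U_le_top M i (hd i)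
  have hs : 0 ≤ ∑ i, d i := Finset.sum_nonneg fun i _ => (hd i).1
  unfold EVModel.stage
  rw [NEM_eq]
  have hmax : 0 ≤ max (v + (∑ i, d i) - rt) 0 := le_max_right _ 0
  have habs := le_abs_self rt
  have habs2 := abs_nonneg rt
  nlinarith [mul_nonneg (by linarith : (0:ℝ) ≤ M.pip t' - M.pim t') hmax]

/-- objective inside the definition of `W`. -/
noncomputable def wObj (M : EVModel K T Ω) : ℕ → ℝ → ℝ → (ℝ × (Fin K → ℝ)) → ℝ
  | 0 => fun y rt p => M.stage (T - 1) rt p.1 p.2 - M.γ * (y - p.1)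
  | (k+1) => fun y rt p => M.stage (T - 2 - k) rt p.1 p.2 +
      ∫ ω, M.W k (y - p.1) (M.r (T - 1 - k) ω) ∂M.μ

lemma W_eq (M : EVModel K T Ω) (k : ℕ) (y rt : ℝ) :
    M.W k y rt = sSup ((wObj M k y rt) '' M.feas y) := by
  cases k <;> rfl

lemma feas_nonempty (M : EVModel K T Ω) {y : ℝ} (hy : 0 ≤ y) :
    ((0 : ℝ), (fun _ => 0 : Fin K → ℝ)) ∈ M.feas y := by
  constructor
  · exact ⟨le_refl 0, le_min M.vbar_pos.le hy⟩
  · intro i; exact ⟨le_refl 0, (M.dbar_pos i).le⟩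

lemma feas_v_mem (M : EVModel K T Ω) {y : ℝ} {p : ℝ × (Fin K → ℝ)}
    (hp : p ∈ M.feas y) : 0 ≤ p.1 ∧ p.1 ≤ M.vbar ∧ p.1 ≤ y :=
  ⟨hp.1.1, le_trans hp.1.2 (min_le_left _ _), le_trans hp.1.2 (min_le_right _ _)⟩

lemma wObj_le (M : EVModel K T Ω) (hT : 0 < T) :
    ∀ k y rt, 0 ≤ y → ∀ p ∈ M.feas y,
      wObj M k y rt p ≤ Cb M k + M.γ * |rt| := by
  intro k
  induction k with
  | zero =>
    intro y rt hy p hp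
    obtain ⟨hv0, hvv, hvy⟩ := feas_v_mem M hp
    have h1 := stage_le M (by omega : T - 1 < T) rt p.1 p.2 hv0 hp.2
    have hγ := gamma_pos M hT
    simp only [wObj, Cb]
    nlinarith
  | succ k ih =>
    intro y rt hy p hp
    obtain ⟨hv0, hvv, hvy⟩ := feas_v_mem M hp
    have h1 := stage_le M (by omega : T - 2 - k < T) rt p.1 p.2 hv0 hp.2
    have hγ := gamma_pos M hT
    have hyv : 0 ≤ y - p.1 := by linarith
    have hrint : 0 ≤ ∫ ω, M.r (T - 1 - k) ω ∂M.μ :=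
      integral_nonneg (fun ω => M.r_nonneg _ ω)
    have hInt : (∫ ω, M.W k (y - p.1) (M.r (T - 1 - k) ω) ∂M.μ) ≤
        Cb M k + M.γ * (∫ ω, M.r (T - 1 - k) ω ∂M.μ) := by
      haveI := M.prob
      by_cases hint : Integrable (fun ω => M.W k (y - p.1) (M.r (T - 1 - k) ω)) M.μ
      · have hptw : ∀ ω, M.W k (y - p.1) (M.r (T - 1 - k) ω) ≤
            Cb M k + M.γ * (M.r (T - 1 - k) ω) := by
          intro ω
          have hW : M.W k (y - p.1) (M.r (T - 1 - k) ω) ≤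
              Cb M k + M.γ * |M.r (T - 1 - k) ω| := by
            rw [W_eq]
            apply Real.sSup_le
            · rintro x ⟨q, hq, rfl⟩
              exact ih (y - p.1) (M.r (T - 1 - k) ω) hyv q hq
            · exact add_nonneg (Cb_nonneg M hT k)
                (mul_nonneg hγ.le (abs_nonneg _))
          rwa [abs_of_nonneg (M.r_nonneg _ ω)] at hW
        have hg : Integrable (fun ω => Cb M k + M.γ * (M.r (T - 1 - k) ω)) M.μ :=
          (integrable_const _).add ((M.r_int _).const_mul M.γ)
        have := integral_mono hint hg hptw
        rwa [integral_add (integrable_const _) ((M.r_int _).const_mul M.γ),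
          integral_const, integral_const_mul, probReal_univ,
          one_smul] at this
      · rw [integral_undef hint]
        exact add_nonneg (Cb_nonneg M hT k) (mul_nonneg hγ.le hrint)
    simp only [wObj, Cb]
    linarith

lemma W_le (M : EVModel K T Ω) (hT : 0 < T) (k : ℕ) (y rt : ℝ) (hy : 0 ≤ y) :
    M.W k y rt ≤ Cb M k + M.γ * |rt| := by
  rw [W_eq]
  apply Real.sSup_le
  · rintro x ⟨q, hq, rfl⟩
    exact wObj_le M hT k y rt hy q hq
  · exact add_nonneg (Cb_nonneg M hT k) (mul_nonneg (gamma_pos M hT).le (abs_nonneg _))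

lemma W_bddAbove (M : EVModel K T Ω) (hT : 0 < T) (k : ℕ) (y rt : ℝ) (hy : 0 ≤ y) :
    BddAbove ((wObj M k y rt) '' M.feas y) := by
  refine ⟨Cb M k + M.γ * |rt|, ?_⟩
  rintro x ⟨q, hq, rfl⟩
  exact wObj_le M hT k y rt hy q hq

end DP

section DP2
variable {K T : ℕ} {Ω : Type} [MeasurableSpace Ω]

lemma wObj_rt_diff (M : EVModel K T Ω) (hT : 0 < T) (k : ℕ) (y r1 r2 : ℝ)
    (p : ℝ × (Fin K → ℝ)) :
    wObj M k y r1 p - wObj M k y r2 p ≤ M.γ * |r1 - r2| := by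
  have hkey : ∀ t' : ℕ, t' < T → ∀ v : ℝ,
      M.stage t' r1 v p.2 - M.stage t' r2 v p.2 ≤ M.γ * |r1 - r2| := by
    intro t' ht' v
    obtain ⟨h1, h2, h3⟩ := M.A1 t' ht'
    unfold EVModel.stage
    have hlip := NEM_lip (pp := M.pip t') (pm := M.pim t')
      (a := v + (∑ i, p.2 i) - r2) (b := v + (∑ i, p.2 i) - r1) h1.le h2
    have harg : (v + (∑ i, p.2 i) - r2) - (v + (∑ i, p.2 i) - r1) = r1 - r2 := by ring
    rw [harg] at hlip
    have h4 := abs_le.mp hlip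
    have h5 : M.pip t' * |r1 - r2| ≤ M.γ * |r1 - r2| :=
      mul_le_mul_of_nonneg_right (by linarith) (abs_nonneg _)
    linarith [h4.2]
  cases k with
  | zero =>
    simp only [wObj]
    have := hkey (T - 1) (by omega) p.1
    linarith
  | succ k =>
    simp only [wObj]
    have := hkey (T - 2 - k) (by omega) p.1
    linarith

lemma W_lip (M : EVModel K T Ω) (hT : 0 < T) (k : ℕ) (y r1 r2 : ℝ) (hy : 0 ≤ y) :
    |M.W k y r1 - M.W k y r2| ≤ M.γ * |r1 - r2| := by
  have hone : ∀ a b : ℝ, M.W k y a ≤ M.W k y b + M.γ * |a - b| := by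
    intro a b
    rw [W_eq, W_eq]
    have hne : ((wObj M k y a) '' M.feas y).Nonempty :=
      ⟨_, Set.mem_image_of_mem _ (feas_nonempty M hy)⟩
    apply csSup_le hne
    rintro x ⟨q, hq, rfl⟩
    have h1 := wObj_rt_diff M hT k y a b q
    have h2 : wObj M k y b q ≤ sSup ((wObj M k y b) '' M.feas y) :=
      le_csSup (W_bddAbove M hT k y b hy) (Set.mem_image_of_mem _ hq)
    linarith
  have h1 := hone r1 r2
  have h2 := hone r2 r1
  rw [abs_sub_comm r2 r1] at h2
  rw [abs_le]
  constructor <;> linarith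

end DP2

section DP3
variable {K T : ℕ} {Ω : Type} [MeasurableSpace Ω]

lemma W_meas (M : EVModel K T Ω) (hT : 0 < T) (k : ℕ) (y : ℝ) (hy : 0 ≤ y) :
    Measurable (M.W k y) := by
  have hγ := gamma_pos M hT
  have hlip : LipschitzWith (Real.toNNReal M.γ) (M.W k y) := by
    apply LipschitzWith.of_dist_le_mul
    intro a b
    rw [Real.dist_eq, Real.dist_eq, Real.coe_toNNReal _ hγ.le]
    exact W_lip M hT k y a b hy
  exact hlip.continuous.measurable

lemma W_int (M : EVModel K T Ω) (hT : 0 < T) (k : ℕ) (y : ℝ) (s : ℕ) (hy : 0 ≤ y) :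
    Integrable (fun ω => M.W k y (M.r s ω)) M.μ := by
  haveI := M.prob
  have hγ := gamma_pos M hT
  apply Integrable.mono'
    ((integrable_const (|M.W k y 0|)).add ((M.r_int s).const_mul M.γ))
    (((W_meas M hT k y hy).comp (M.r_meas s)).aestronglyMeasurable)
  refine Filter.Eventually.of_forall (fun ω => ?_)
  have h1 := W_lip M hT k y (M.r s ω) 0 hy
  rw [sub_zero, abs_of_nonneg (M.r_nonneg s ω)] at h1
  have h2 : |M.W k y (M.r s ω)| - |M.W k y 0| ≤ |M.W k y (M.r s ω) - M.W k y 0| :=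
    abs_sub_abs_le_abs_sub _ _
  simp only [Pi.add_apply, Function.comp_apply, Real.norm_eq_abs]
  linarith

lemma feas_eq_of_ge (M : EVModel K T Ω) {y y' : ℝ} (h1 : M.vbar ≤ y)
    (h2 : M.vbar ≤ y') : M.feas y = M.feas y' := by
  unfold EVModel.feas
  rw [min_eq_left h1, min_eq_left h2]

lemma sSup_add_const {A : Set ℝ} (hne : A.Nonempty) (hbdd : BddAbove A) (c : ℝ) :
    sSup ((fun x => x + c) '' A) = sSup A + c :=
  (Monotone.map_csSup_of_continuousAt
    ((continuous_id.add continuous_const).continuousAt)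
    (fun a b h => by simpa using add_le_add_right h c) hne hbdd).symm

lemma W_slope (M : EVModel K T Ω) (hT : 0 < T) :
    ∀ (k : ℕ) (y y' rt : ℝ), ((k:ℝ)+1) * M.vbar ≤ y → ((k:ℝ)+1) * M.vbar ≤ y' →
      M.W k y rt = M.W k y' rt - M.γ * (y - y') := by
  intro k
  induction k with
  | zero =>
    intro y y' rt hy hy'
    have hvb := M.vbar_pos
    have hvy : M.vbar ≤ y := by push_cast at hy; linarith
    have hvy' : M.vbar ≤ y' := by push_cast at hy'; linarith
    have hy'0 : (0:ℝ) ≤ y' := by linarith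
    rw [W_eq, W_eq, feas_eq_of_ge M hvy hvy']
    have himg : (wObj M 0 y rt) '' M.feas y' =
        (fun x => x + (- M.γ * (y - y'))) '' ((wObj M 0 y' rt) '' M.feas y') := by
      rw [Set.image_image]
      apply Set.image_congr
      intro p _
      simp only [wObj]
      ring
    rw [himg, sSup_add_const
      (Set.Nonempty.image _ ⟨_, feas_nonempty M hy'0⟩)
      (W_bddAbove M hT 0 y' rt hy'0)]
    ring
  | succ k ih =>
    intro y y' rt hy hy'
    have hvb := M.vbar_pos
    push_cast at hy hy'
    have hk0 : (0:ℝ) ≤ (k:ℝ) := Nat.cast_nonneg k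
    have hvy : M.vbar ≤ y := by nlinarith
    have hvy' : M.vbar ≤ y' := by nlinarith
    have hy'0 : (0:ℝ) ≤ y' := by linarith
    rw [W_eq, W_eq, feas_eq_of_ge M hvy hvy']
    have himg : (wObj M (k+1) y rt) '' M.feas y' =
        (fun x => x + (- M.γ * (y - y'))) '' ((wObj M (k+1) y' rt) '' M.feas y') := by
      rw [Set.image_image]
      apply Set.image_congr
      intro p hp
      obtain ⟨hv0, hvv, hvy''⟩ := feas_v_mem M hp
      have hIH : (fun ω => M.W k (y - p.1) (M.r (T - 1 - k) ω)) =
          (fun ω => M.W k (y' - p.1) (M.r (T - 1 - k) ω) + (- M.γ * (y - y'))) := by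
        funext ω
        rw [ih (y - p.1) (y' - p.1) (M.r (T - 1 - k) ω)
          (by nlinarith) (by nlinarith)]
        ring
      haveI := M.prob
      simp only [wObj]
      rw [hIH, integral_add (W_int M hT k (y' - p.1) (T - 1 - k) (by linarith))
        (integrable_const _), integral_const]
      rw [probReal_univ, one_smul]
      ring
    rw [himg, sSup_add_const
      (Set.Nonempty.image _ ⟨_, feas_nonempty M hy'0⟩)
      (W_bddAbove M hT (k+1) y' rt hy'0)]
    ring

end DP3


end AuxDecoupling

/-- **Lemma (consumption decoupling in the charge-at-capacity region).**
For every `t ∈ {0, …, T-1}`, if `y ≥ (T - t) v̄`, then the optimal consumption `d*`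
of the Bellman equation at time `t` follows the two-threshold policy of Theorem 3
with prices `(π_t⁺, π_t⁻)` applied to the adjusted renewable `r̃ = max {r_t - v̄, 0}`. -/
theorem consumption_decoupling (K T : ℕ) (Ω : Type) [MeasurableSpace Ω]
    (M : EVModel K T Ω)
    -- `L i` is the marginal utility `U_i'` on `[0, d̄_i]`
    (L : Fin K → ℝ → ℝ)
    (hL : ∀ i, ∀ x ∈ Set.Icc 0 (M.dbar i),
      HasDerivWithinAt (M.U i) (L i x) (Set.Icc 0 (M.dbar i)) x)
    (hLcont : ∀ i, ContinuousOn (L i) (Set.Icc 0 (M.dbar i)))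
    -- `l i π = max {0, min {d̄_i, L_i⁻¹(π)}}`, characterized by clipping
    (l : Fin K → ℝ → ℝ)
    (hl_mem : ∀ i π, l i π ∈ Set.Icc 0 (M.dbar i))
    (hl_hi : ∀ i π, π ≤ L i (M.dbar i) → l i π = M.dbar i)
    (hl_lo : ∀ i π, L i 0 ≤ π → l i π = 0)
    (hl_mid : ∀ i π, L i (M.dbar i) < π → π < L i 0 → L i (l i π) = π)
    (t : ℕ) (ht : t < T) (rt : ℝ) (hrt : 0 ≤ rt)
    (y : ℝ) (hy : ((T - t : ℕ) : ℝ) * M.vbar ≤ y)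
    (p : ℝ × (Fin K → ℝ)) (hp : M.IsBellmanOpt t y rt p) :
    (max (rt - M.vbar) 0 < ∑ i, l i (M.pip t) → ∀ i, p.2 i = l i (M.pip t)) ∧
      ((∑ i, l i (M.pim t)) < max (rt - M.vbar) 0 → ∀ i, p.2 i = l i (M.pim t)) ∧
      ((∑ i, l i (M.pip t)) ≤ max (rt - M.vbar) 0 →
        max (rt - M.vbar) 0 ≤ ∑ i, l i (M.pim t) →
        ∃ ν ∈ Set.Icc (M.pim t) (M.pip t),
          (∑ i, l i ν) = max (rt - M.vbar) 0 ∧ ∀ i, p.2 i = l i ν) := by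
  classical
  haveI := M.prob
  have hT : 0 < T := lt_of_le_of_lt (Nat.zero_le t) ht
  obtain ⟨hA1, hA2, hA3⟩ := M.A1 t ht
  have hγ := gamma_pos M hT
  have hvb := M.vbar_pos
  have hvy : M.vbar ≤ y := by
    have h1 : (1:ℝ) ≤ ((T - t : ℕ):ℝ) := by
      have : 1 ≤ T - t := by omega
      exact_mod_cast this
    nlinarith
  have hy0 : (0:ℝ) ≤ y := by linarith
  obtain ⟨hpfeas, hpopt⟩ := hp
  obtain ⟨hv0, hvv, hvy'⟩ := feas_v_mem M hpfeas
  have hqfeas : ∀ d' : Fin K → ℝ, (∀ i, d' i ∈ Set.Icc 0 (M.dbar i)) →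
      ((M.vbar, d') : ℝ × (Fin K → ℝ)) ∈ M.feas y := by
    intro d' hd'
    exact ⟨⟨hvb.le, le_min le_rfl hvy⟩, hd'⟩
  -- Step 1 : the optimal charge is at capacity
  have hv : p.1 = M.vbar := by
    by_contra hne
    have hlt : p.1 < M.vbar := lt_of_le_of_ne hvv hne
    have hcomp := hpopt (M.vbar, p.2) (hqfeas p.2 hpfeas.2)
    have hstage : M.stage t rt M.vbar p.2 - M.stage t rt p.1 p.2 ≥
        - (M.pip t * (M.vbar - p.1)) := by
      unfold EVModel.stage
      have hml := NEM_mono_lip (pp := M.pip t) (pm := M.pim t)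
        (a := p.1 + (∑ i, p.2 i) - rt) (b := M.vbar + (∑ i, p.2 i) - rt)
        (by linarith) hA1.le hA2
      have harg : (M.vbar + (∑ i, p.2 i) - rt) - (p.1 + (∑ i, p.2 i) - rt)
          = M.vbar - p.1 := by ring
      rw [harg] at hml
      linarith
    by_cases hterm : t = T - 1
    · simp only [EVModel.bellObj, if_pos hterm] at hcomp
      nlinarith
    · have htlt : t < T - 1 := by omega
      have hk1 : T - 1 - (t+1) = T - 2 - t := by omega
      have hTt : T - t = (T - 2 - t) + 2 := by omega
      have hycast : (((T - 2 - t : ℕ):ℝ) + 2) * M.vbar ≤ y := by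
        rw [hTt] at hy; push_cast at hy; linarith
      have hkc : (0:ℝ) ≤ ((T - 2 - t : ℕ):ℝ) := Nat.cast_nonneg _
      simp only [EVModel.bellObj, if_neg hterm, EVModel.V, hk1] at hcomp
      have hIH : (fun ω => M.W (T - 2 - t) (y - M.vbar) (M.r (t+1) ω)) =
          (fun ω => M.W (T - 2 - t) (y - p.1) (M.r (t+1) ω)
            + M.γ * (M.vbar - p.1)) := by
        funext ω
        rw [W_slope M hT (T - 2 - t) (y - M.vbar) (y - p.1) (M.r (t+1) ω)
          (by nlinarith) (by nlinarith)]
        ring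
      rw [hIH, integral_add (W_int M hT (T - 2 - t) (y - p.1) (t+1) (by linarith))
        (integrable_const _), integral_const, probReal_univ,
        one_smul] at hcomp
      nlinarith
  -- Step 2 : static optimality of the consumption
  have hstat : ∀ d' : Fin K → ℝ, (∀ i, d' i ∈ Set.Icc 0 (M.dbar i)) →
      (∑ i, M.U i (d' i)) -
          NEMPayment (M.pip t) (M.pim t) ((∑ i, d' i) - max (rt - M.vbar) 0) ≤
        (∑ i, M.U i (p.2 i)) -
          NEMPayment (M.pip t) (M.pim t) ((∑ i, p.2 i) - max (rt - M.vbar) 0) := by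
    intro d' hd'
    have hcomp := hpopt (M.vbar, d') (hqfeas d' hd')
    have hstage : M.stage t rt M.vbar d' ≤ M.stage t rt M.vbar p.2 := by
      by_cases hterm : t = T - 1
      · simp only [EVModel.bellObj, if_pos hterm] at hcomp
        rw [hv] at hcomp
        linarith
      · simp only [EVModel.bellObj, if_neg hterm] at hcomp
        rw [hv] at hcomp
        linarith
    unfold EVModel.stage at hstage
    rw [NEM_shift M.vbar rt (∑ i, d' i)
        (Finset.sum_nonneg fun i _ => (hd' i).1),
      NEM_shift M.vbar rt (∑ i, p.2 i)
        (Finset.sum_nonneg fun i _ => (hpfeas.2 i).1)] at hstage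
    linarith
  exact static_opt M.dbar M.dbar_pos M.U M.U_strictConcave L hL hLcont l
    hl_mem hl_hi hl_lo hl_mid (M.pip t) (M.pim t) hA1 hA2
    (max (rt - M.vbar) 0) p.2 hpfeas.2 hstat
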